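/- Let X be a T1 regular topological space and let f : 𝕊 → X be a continuous open surjection from the Sorgenfrey line onto X. For rationals a < b, let P_{a,b} := { x ∈ [a, b) : for all y ∈ [a, b), f(y) = f(x) implies y = x }. Then for all rationals a < b, the image f[P_{a,b}] is a closed subset of the subspace f[[a, b)] of X. -/
import Mathlib


open Set Filter Topology Function

/-- The Sorgenfrey line: the real line as a type synonym. -/
def SorgenfreyLine : Type := ℝ

notation "𝕊" => SorgenfreyLine

noncomputable instance : LinearOrder 𝕊 := inferInstanceAs (LinearOrder ℝ)
instance : RatCast 𝕊 := inferInstanceAs (RatCast ℝ)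

/-- The topology on the Sorgenfrey line, generated by half-open intervals `[a, b)`, `a < b`. -/
instance : TopologicalSpace 𝕊 :=
  TopologicalSpace.generateFrom {s : Set 𝕊 | ∃ a b : 𝕊, a < b ∧ s = Set.Ico a b}

/-- `Pab f a b` is the set of points `x ∈ [a, b)` that are the unique point of `[a, b)`
mapped by `f` to `f x`. -/
def Pab {X : Type*} (f : 𝕊 → X) (a b : 𝕊) : Set 𝕊 :=
  {x | x ∈ Set.Ico a b ∧ ∀ y ∈ Set.Ico a b, f y = f x → y = x}

lemma sorgenfrey_isOpen_Ico {u v : 𝕊} (h : u < v) : IsOpen (Set.Ico u v) :=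
  TopologicalSpace.isOpen_generateFrom_of_mem ⟨u, v, h, rfl⟩

/-- For a continuous open surjection `f` from the Sorgenfrey line onto a T1 regular space and
rationals `a < b`, the image `f '' P_{a,b}` is closed in the subspace `f '' [a, b)` of `X`. -/
theorem stmt11 {X : Type} [TopologicalSpace X] [T1Space X] [RegularSpace X] (f : 𝕊 → X)
    (hf : Continuous f) (hopen : IsOpenMap f) (hsurj : Surjective f)
    (a b : ℚ) (hab : a < b) :
    IsClosed (Subtype.val ⁻¹' (f '' Pab f (a : 𝕊) (b : 𝕊)) :
      Set (f '' Set.Ico (a : 𝕊) (b : 𝕊) : Set X)) := by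
  rw [← isOpen_compl_iff, isOpen_iff_forall_mem_open]
  rintro ⟨q, hq⟩ hqc
  simp only [mem_compl_iff, mem_preimage] at hqc
  obtain ⟨x, hxI, hfx⟩ := hq
  have hxP : x ∉ Pab f (a : 𝕊) (b : 𝕊) := fun h => hqc ⟨x, h, hfx⟩
  simp only [Pab, mem_setOf_eq, not_and] at hxP
  push_neg at hxP
  obtain ⟨y, hyI, hfy, hyx⟩ := hxP hxI
  set u := min x y with hu
  set v := max x y with hv
  have huv : u < v := min_lt_max.mpr (Ne.symm hyx)
  have hau : (a : 𝕊) ≤ u := le_min hxI.1 hyI.1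
  have hvb : v < (b : 𝕊) := max_lt hxI.2 hyI.2
  have hfu : f u = q := by
    rcases min_choice x y with h | h <;> rw [hu, h]
    · exact hfx
    · exact hfy.trans hfx
  have hfv : f v = q := by
    rcases max_choice x y with h | h <;> rw [hv, h]
    · exact hfx
    · exact hfy.trans hfx
  refine ⟨Subtype.val ⁻¹' (f '' Set.Ico u v ∩ f '' Set.Ico v (b : 𝕊)), ?_, ?_, ?_⟩
  · rintro ⟨z, hz⟩ hzU
    simp only [mem_preimage, mem_inter_iff] at hzU
    obtain ⟨⟨x1, hx1, hfx1⟩, ⟨x2, hx2, hfx2⟩⟩ := hzU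
    simp only [mem_compl_iff, mem_preimage]
    rintro ⟨p, hp, hfp⟩
    have h1 : x1 = p :=
      hp.2 x1 ⟨le_trans hau hx1.1, lt_trans hx1.2 hvb⟩ (hfx1.trans hfp.symm)
    have h2 : x2 = p :=
      hp.2 x2 ⟨le_trans (hau.trans huv.le) hx2.1, hx2.2⟩ (hfx2.trans hfp.symm)
    exact absurd (h1.trans h2.symm) (ne_of_lt (lt_of_lt_of_le hx1.2 hx2.1))
  · exact ((hopen _ (sorgenfrey_isOpen_Ico huv)).inter
      (hopen _ (sorgenfrey_isOpen_Ico hvb))).preimage continuous_subtype_val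
  · exact ⟨⟨u, ⟨le_refl u, huv⟩, hfu⟩, ⟨v, ⟨le_refl v, hvb⟩, hfv⟩⟩
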